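/- Proposition 1 (Maxwell operation does not exceed Lüders entropy): Let (P_n)_{n∈N} be a complete family of mutually orthogonal projections on a finite-dimensional Hilbert space, (U_n) unitaries, and ρ a density matrix. Then S(∑_n U_n P_n ρ P_n U_n*) ≤ S(∑_n P_n ρ P_n). -/

import Mathlib

open Matrix
open scoped ComplexOrder

/-- Von Neumann entropy of a matrix: `-∑ λᵢ log λᵢ` over the eigenvalues if the
matrix is Hermitian (junk value `0` otherwise). -/
noncomputable def vnEntropy {d : Type*} [Fintype d] [DecidableEq d]
    (A : Matrix d d ℂ) : ℝ :=
  if h : A.IsHermitian then -∑ i, h.eigenvalues i * Real.log (h.eigenvalues i) else 0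

noncomputable def shannonEntropy {I : Type*} [Fintype I] (p : I → ℝ) : ℝ :=
  -∑ i, p i * Real.log (p i)

set_option linter.unusedSectionVars false
set_option maxHeartbeats 1000000

namespace MaxwellAux


variable {d : Type*} [Fintype d] [DecidableEq d]

/-- eigenvector of a Hermitian matrix as a plain function -/
noncomputable def evec {A : Matrix d d ℂ} (hA : A.IsHermitian) (j : d) : d → ℂ :=
  ⇑(hA.eigenvectorBasis j)

lemma evec_dot {A : Matrix d d ℂ} (hA : A.IsHermitian) (j k : d) :
    star (evec hA j) ⬝ᵥ evec hA k = if j = k then 1 else 0 := by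
  have h := hA.eigenvectorBasis.orthonormal
  rw [orthonormal_iff_ite] at h
  have h2 : evec hA k ⬝ᵥ star (evec hA j) = if j = k then 1 else 0 := h j k
  rw [dotProduct_comm] at h2
  exact h2

lemma mulVec_evec {A : Matrix d d ℂ} (hA : A.IsHermitian) (j : d) :
    A *ᵥ evec hA j = (hA.eigenvalues j : ℂ) • evec hA j := by
  rw [evec, hA.mulVec_eigenvectorBasis]
  funext i
  simp [Complex.real_smul]

lemma parseval {A : Matrix d d ℂ} (hA : A.IsHermitian) (x y : d → ℂ) :
    ∑ j, (star x ⬝ᵥ evec hA j) * (star (evec hA j) ⬝ᵥ y) = star x ⬝ᵥ y :=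
  by
  have h := hA.eigenvectorBasis.sum_inner_mul_inner (WithLp.toLp 2 x) (WithLp.toLp 2 y)
  refine (Finset.sum_congr rfl fun j _ => ?_).trans (h.trans ?_)
  · show _ = (evec hA j ⬝ᵥ star x) * (y ⬝ᵥ star (evec hA j))
    rw [dotProduct_comm (evec hA j), dotProduct_comm y]
  · show y ⬝ᵥ star x = _
    exact dotProduct_comm _ _

lemma dotProduct_sumv {ι : Type*} (v : d → ℂ) (s : Finset ι) (f : ι → d → ℂ) :
    v ⬝ᵥ (∑ j ∈ s, f j) = ∑ j ∈ s, v ⬝ᵥ f j := by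
  simp only [dotProduct, Finset.sum_apply, Finset.mul_sum]
  exact Finset.sum_comm

lemma expand_evec {A : Matrix d d ℂ} (hA : A.IsHermitian) (y : d → ℂ) :
    y = ∑ j, (star (evec hA j) ⬝ᵥ y) • evec hA j := by
  funext i
  have h := parseval hA (Pi.single i 1) y
  have hs : star (Pi.single i 1 : d → ℂ) = Pi.single i 1 := by
    funext a; by_cases hai : a = i <;> simp [Pi.single_apply, hai]
  rw [hs] at h
  simp only [single_dotProduct, one_mul] at h
  rw [Finset.sum_apply]
  simp only [Pi.smul_apply, smul_eq_mul]
  rw [← h]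
  exact Finset.sum_congr rfl fun j _ => mul_comm _ _



lemma mulVec_sumv {ι : Type*} (A : Matrix d d ℂ) (s : Finset ι) (f : ι → d → ℂ) :
    A *ᵥ (∑ j ∈ s, f j) = ∑ j ∈ s, A *ᵥ f j := by
  simpa only [Matrix.mulVecLin_apply] using map_sum A.mulVecLin f s

lemma quadForm {A : Matrix d d ℂ} (hA : A.IsHermitian) (y : d → ℂ) :
    star y ⬝ᵥ (A *ᵥ y) =
      ((∑ j, hA.eigenvalues j * Complex.normSq (star (evec hA j) ⬝ᵥ y) : ℝ) : ℂ) := by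
  have h1 : A *ᵥ y = ∑ j, ((star (evec hA j) ⬝ᵥ y) * (hA.eigenvalues j : ℂ)) • evec hA j := by
    conv_lhs => rw [expand_evec hA y]
    rw [mulVec_sumv]
    refine Finset.sum_congr rfl fun j _ => ?_
    rw [mulVec_smul, mulVec_evec, smul_smul]
  rw [h1, dotProduct_sumv]
  push_cast
  refine Finset.sum_congr rfl fun j _ => ?_
  rw [dotProduct_smul]
  have hy : star y ⬝ᵥ evec hA j = star (star (evec hA j) ⬝ᵥ y) := star_dotProduct _ _
  rw [hy]
  set c := star (evec hA j) ⬝ᵥ y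
  rw [smul_eq_mul]
  have hc : c * star c = (Complex.normSq c : ℂ) := Complex.mul_conj c
  rw [mul_right_comm, hc, mul_comm]


lemma normSq_dot_comm (x y : d → ℂ) :
    (star x ⬝ᵥ y) * (star y ⬝ᵥ x) = (Complex.normSq (star x ⬝ᵥ y) : ℂ) := by
  rw [show star y ⬝ᵥ x = star (star x ⬝ᵥ y) from star_dotProduct _ _]
  exact Complex.mul_conj _

lemma ensemble_entropy_le {ι : Type*} [Fintype ι]
    {X : Matrix d d ℂ} (hX : X.IsHermitian)
    (t : ι → ℝ) (ht : ∀ k, 0 ≤ t k) (g : ι → d → ℂ)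
    (hg : ∀ k, star (g k) ⬝ᵥ g k = 1)
    (hQ : ∀ y : d → ℂ, star y ⬝ᵥ (X *ᵥ y)
      = ((∑ k, t k * Complex.normSq (star (g k) ⬝ᵥ y) : ℝ) : ℂ)) :
    vnEntropy X ≤ ∑ k, Real.negMulLog (t k) := by
  classical
  set μ : d → ℝ := hX.eigenvalues with hμdef
  set G : d → ι → ℝ := fun j k => Complex.normSq (star (g k) ⬝ᵥ evec hX j) with hGdef
  have hG0 : ∀ j k, 0 ≤ G j k := fun j k => Complex.normSq_nonneg _
  have hμ : ∀ j, μ j = ∑ k, t k * G j k := by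
    intro j
    have h2 : star (evec hX j) ⬝ᵥ (X *ᵥ evec hX j) = ((μ j : ℝ) : ℂ) := by
      rw [mulVec_evec hX j, dotProduct_smul, evec_dot hX j j, if_pos rfl, smul_eq_mul, mul_one]
    have h1 := hQ (evec hX j)
    rw [h2] at h1
    exact_mod_cast h1
  have hμ0 : ∀ j, 0 ≤ μ j := by
    intro j
    rw [hμ j]
    exact Finset.sum_nonneg fun k _ => mul_nonneg (ht k) (hG0 j k)
  have hGpar : ∀ k, ∑ j, G j k = 1 := by
    intro k
    have h := parseval hX (g k) (g k)
    rw [hg k] at h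
    have h' : ∀ j, (star (g k) ⬝ᵥ evec hX j) * (star (evec hX j) ⬝ᵥ g k)
        = ((G j k : ℝ) : ℂ) := fun j => normSq_dot_comm _ _
    rw [Finset.sum_congr rfl fun j _ => h' j] at h
    exact_mod_cast h
  set J : Finset d := Finset.univ.filter (fun j => 0 < μ j) with hJdef
  set K : Finset ι := Finset.univ.filter (fun k => 0 < t k) with hKdef
  have hJmem : ∀ j, j ∈ J ↔ 0 < μ j := fun j => by simp [hJdef]
  have hKmem : ∀ k, k ∈ K ↔ 0 < t k := fun k => by simp [hKdef]
  have hJz : ∀ j, j ∉ J → μ j = 0 := fun j hj =>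
    le_antisymm (by simpa [hJmem j] using hj) (hμ0 j)
  have hKz : ∀ k, k ∉ K → t k = 0 := fun k hk =>
    le_antisymm (by simpa [hKmem k] using hk) (ht k)
  have hGz : ∀ j, μ j = 0 → ∀ k, 0 < t k → G j k = 0 := by
    intro j hj k hk
    have h0 : ∑ k, t k * G j k = 0 := (hμ j).symm.trans hj
    have := (Finset.sum_eq_zero_iff_of_nonneg
      (fun k _ => mul_nonneg (ht k) (hG0 j k))).mp h0 k (Finset.mem_univ k)
    rcases mul_eq_zero.mp this with h | h
    · exact absurd h (ne_of_gt hk)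
    · exact h
  have hGJ : ∀ k, k ∈ K → ∑ j ∈ J, G j k = 1 := by
    intro k hk
    have hss := Finset.sum_subset (Finset.subset_univ J) (f := fun j => G j k)
      (fun j _ hj => hGz j (hJz j hj) k ((hKmem k).mp hk))
    rw [← hGpar k, ← hss]
  -- key bound
  have hkey : ∀ k, k ∈ K → t k * (∑ j ∈ J, G j k / μ j) ≤ 1 := by
    intro k hk
    have htk : 0 < t k := (hKmem k).mp hk
    set c : ℝ := ∑ j ∈ J, G j k / μ j with hcdef
    have hc0 : 0 ≤ c := Finset.sum_nonneg fun j hj =>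
      div_nonneg (hG0 j k) (le_of_lt ((hJmem j).mp hj))
    set v : d → ℂ := ∑ j ∈ J, ((starRingEnd ℂ) (star (g k) ⬝ᵥ evec hX j) / (μ j : ℂ)) • evec hX j
      with hvdef
    have hwv : ∀ i, star (evec hX i) ⬝ᵥ v =
        if i ∈ J then (starRingEnd ℂ) (star (g k) ⬝ᵥ evec hX i) / (μ i : ℂ) else 0 := by
      intro i
      rw [hvdef, dotProduct_sumv]
      by_cases hi : i ∈ J
      · rw [if_pos hi]
        rw [Finset.sum_eq_single_of_mem i hi]
        · rw [dotProduct_smul, evec_dot hX i i, if_pos rfl, smul_eq_mul, mul_one]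
        · intro j hj hne
          rw [dotProduct_smul, evec_dot hX i j, if_neg (Ne.symm hne), smul_zero]
      · rw [if_neg hi]
        refine Finset.sum_eq_zero fun j hj => ?_
        rw [dotProduct_smul, evec_dot hX i j, if_neg (show ¬ i = j from fun h => hi (by rw [h]; exact hj)), smul_zero]
    have hgv : star (g k) ⬝ᵥ v = (c : ℂ) := by
      rw [hvdef, dotProduct_sumv, hcdef]
      push_cast
      refine Finset.sum_congr rfl fun j hj => ?_
      rw [dotProduct_smul, smul_eq_mul, div_mul_eq_mul_div, mul_comm,
        show (star (g k) ⬝ᵥ evec hX j) * (starRingEnd ℂ) (star (g k) ⬝ᵥ evec hX j)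
          = (Complex.normSq (star (g k) ⬝ᵥ evec hX j) : ℂ) from Complex.mul_conj _]
    have hXv : star v ⬝ᵥ (X *ᵥ v) = (c : ℂ) := by
      rw [quadForm hX v]
      norm_cast
      rw [hcdef]
      rw [← Finset.sum_subset (Finset.subset_univ J) (s₁ := J)
        (f := fun j => μ j * Complex.normSq (star (evec hX j) ⬝ᵥ v)) ?_]
      · refine Finset.sum_congr rfl fun j hj => ?_
        beta_reduce
        rw [hwv j, if_pos hj]
        have hμj : 0 < μ j := (hJmem j).mp hj
        rw [Complex.normSq_div, Complex.normSq_conj]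
        rw [show Complex.normSq ((μ j : ℝ) : ℂ) = μ j * μ j from Complex.normSq_ofReal _]
        field_simp
        ring
      · intro j _ hj
        show μ j * Complex.normSq (star (evec hX j) ⬝ᵥ v) = 0
        rw [hwv j, if_neg hj, Complex.normSq_zero, mul_zero]
    have hQv := hQ v
    rw [hXv] at hQv
    have hreal : c = ∑ l, t l * Complex.normSq (star (g l) ⬝ᵥ v) := by exact_mod_cast hQv
    have hterm : t k * Complex.normSq (star (g k) ⬝ᵥ v) ≤ c := by
      rw [hreal]
      exact Finset.single_le_sum (f := fun l => t l * Complex.normSq (star (g l) ⬝ᵥ v))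
        (fun l _ => mul_nonneg (ht l) (Complex.normSq_nonneg _)) (Finset.mem_univ k)
    rw [hgv, Complex.normSq_ofReal] at hterm
    rcases eq_or_lt_of_le hc0 with hceq | hcpos
    · rw [← hceq, mul_zero]
      exact zero_le_one
    · have h1 : (t k * c) * c ≤ 1 * c := by rw [one_mul]; nlinarith [hterm]
      exact le_of_mul_le_mul_right h1 hcpos
  -- entropy identities
  have hS : vnEntropy X = ∑ j ∈ J, ∑ k ∈ K, G j k * t k * (-(Real.log (μ j))) := by
    rw [vnEntropy, dif_pos hX]
    rw [← Finset.sum_neg_distrib]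
    rw [← Finset.sum_subset (Finset.subset_univ J)
      (f := fun j => -(μ j * Real.log (μ j))) ?_]
    · refine Finset.sum_congr rfl fun j hj => ?_
      have h1 : μ j = ∑ k ∈ K, t k * G j k := by
        rw [hμ j]
        refine (Finset.sum_subset (Finset.subset_univ K) ?_).symm
        intro k _ hk
        rw [hKz k hk, zero_mul]
      calc -(μ j * Real.log (μ j))
          = (∑ k ∈ K, t k * G j k) * (-(Real.log (μ j))) := by
            rw [← h1]; ring
        _ = ∑ k ∈ K, G j k * t k * (-(Real.log (μ j))) := by
            rw [Finset.sum_mul]; exact Finset.sum_congr rfl fun k _ => by ring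
    · intro j _ hj
      show -(μ j * Real.log (μ j)) = 0
      rw [hJz j hj]
      simp
  have hH : ∑ k, Real.negMulLog (t k) = ∑ k ∈ K, ∑ j ∈ J, G j k * t k * (-(Real.log (t k))) := by
    rw [← Finset.sum_subset (Finset.subset_univ K) (f := fun k => Real.negMulLog (t k)) ?_]
    · refine Finset.sum_congr rfl fun k hk => ?_
      have hh : ∑ j ∈ J, G j k * t k * (-(Real.log (t k)))
          = (∑ j ∈ J, G j k) * (t k * (-(Real.log (t k)))) := by
        rw [Finset.sum_mul]
        exact Finset.sum_congr rfl fun j _ => by ring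
      rw [hh, hGJ k hk, one_mul, Real.negMulLog]
      ring
    · intro k _ hk
      show Real.negMulLog (t k) = 0
      rw [hKz k hk]
      exact Real.negMulLog_zero
  rw [hS, hH, Finset.sum_comm]
  refine Finset.sum_le_sum fun k hk => ?_
  have htk : 0 < t k := (hKmem k).mp hk
  have hstep : ∀ j ∈ J, G j k * t k * (-(Real.log (μ j))) - G j k * t k * (-(Real.log (t k)))
      ≤ t k * t k * (G j k / μ j) - t k * G j k := by
    intro j hj
    have hμj : 0 < μ j := (hJmem j).mp hj
    have hlog : Real.log (t k) - Real.log (μ j) ≤ t k / μ j - 1 := by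
      rw [← Real.log_div (ne_of_gt htk) (ne_of_gt hμj)]
      exact Real.log_le_sub_one_of_pos (div_pos htk hμj)
    have hgt : 0 ≤ G j k * t k := mul_nonneg (hG0 j k) (le_of_lt htk)
    have h2 := mul_le_mul_of_nonneg_left hlog hgt
    calc G j k * t k * (-(Real.log (μ j))) - G j k * t k * (-(Real.log (t k)))
        = G j k * t k * (Real.log (t k) - Real.log (μ j)) := by ring
      _ ≤ G j k * t k * (t k / μ j - 1) := h2
      _ = t k * t k * (G j k / μ j) - t k * G j k := by ring
  have hsum := Finset.sum_le_sum hstep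
  rw [Finset.sum_sub_distrib, Finset.sum_sub_distrib] at hsum
  have h3 : ∑ j ∈ J, t k * t k * (G j k / μ j) = t k * (t k * (∑ j ∈ J, G j k / μ j)) := by
    rw [← Finset.mul_sum, mul_assoc]
  have h4 : ∑ j ∈ J, t k * G j k = t k * 1 := by rw [← Finset.mul_sum, hGJ k hk]
  have h5 : t k * (t k * (∑ j ∈ J, G j k / μ j)) ≤ t k * 1 :=
    mul_le_mul_of_nonneg_left (hkey k hk) (le_of_lt htk)
  linarith [hsum, h3, h4, h5]

lemma trace_eq_sum_eigenvalues {X : Matrix d d ℂ} (hX : X.IsHermitian) :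
    X.trace = ((∑ j, hX.eigenvalues j : ℝ) : ℂ) := by
  conv_lhs => rw [hX.spectral_theorem]
  rw [Unitary.conjStarAlgAut_apply]
  rw [Matrix.trace_mul_cycle]
  rw [show (star (hX.eigenvectorUnitary : Matrix d d ℂ)) * (hX.eigenvectorUnitary : Matrix d d ℂ)
    = 1 from Unitary.coe_star_mul_self _, one_mul, Matrix.trace_diagonal]
  push_cast
  rfl

lemma ortho_family_entropy_ge {ι : Type*} [Fintype ι] [DecidableEq ι]
    {X : Matrix d d ℂ} (hX : X.IsHermitian) (hXpsd : X.PosSemidef) (hXtr : X.trace = 1)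
    (t : ι → ℝ) (ht : ∀ k, 0 ≤ t k) (g : ι → d → ℂ)
    (horth : ∀ k l, t k ≠ 0 → t l ≠ 0 → star (g k) ⬝ᵥ g l = if k = l then 1 else 0)
    (heig : ∀ k, t k ≠ 0 → X *ᵥ g k = (t k : ℂ) • g k) :
    ∑ k, Real.negMulLog (t k) ≤ vnEntropy X := by
  classical
  set lam : d → ℝ := hX.eigenvalues with hlamdef
  have hl0 : ∀ j, 0 ≤ lam j := hXpsd.eigenvalues_nonneg
  have htr2 : ∑ j, lam j = 1 := by
    have h := trace_eq_sum_eigenvalues hX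
    rw [hXtr] at h
    exact_mod_cast h.symm
  have hl1 : ∀ j, lam j ≤ 1 := by
    intro j
    rw [← htr2]
    exact Finset.single_le_sum (fun i _ => hl0 i) (Finset.mem_univ j)
  have hη : ∀ j, 0 ≤ Real.negMulLog (lam j) := fun j =>
    Real.negMulLog_nonneg (hl0 j) (hl1 j)
  set K : Finset ι := Finset.univ.filter (fun k => t k ≠ 0) with hKdef
  have hKmem : ∀ k, k ∈ K ↔ t k ≠ 0 := fun k => by simp [hKdef]
  -- Bessel
  have hBessel : ∀ j, ∑ k ∈ K, Complex.normSq (star (g k) ⬝ᵥ evec hX j) ≤ 1 := by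
    intro j
    have hOn : Orthonormal ℂ (fun k : ↥K => (WithLp.equiv 2 (d → ℂ)).symm (g k.1)) := by
      rw [orthonormal_iff_ite]
      intro a b
      show g b.1 ⬝ᵥ star (g a.1) = _
      rw [dotProduct_comm,
        horth a.1 b.1 ((hKmem a.1).mp a.2) ((hKmem b.1).mp b.2)]
      by_cases hab : a = b
      · rw [if_pos hab, if_pos (congrArg Subtype.val hab)]
      · rw [if_neg hab, if_neg (fun h => hab (Subtype.ext h))]
    have hb := hOn.sum_inner_products_le ((WithLp.equiv 2 (d → ℂ)).symm (evec hX j))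
      (s := Finset.univ)
    have hn : ‖(WithLp.equiv 2 (d → ℂ)).symm (evec hX j)‖ = 1 :=
      hX.eigenvectorBasis.orthonormal.1 j
    rw [hn, one_pow] at hb
    calc ∑ k ∈ K, Complex.normSq (star (g k) ⬝ᵥ evec hX j)
        = ∑ k : ↥K, Complex.normSq (star (g k.1) ⬝ᵥ evec hX j) :=
          (Finset.sum_coe_sort K (fun k => Complex.normSq (star (g k) ⬝ᵥ evec hX j))).symm
      _ = ∑ k : ↥K, ‖(inner ℂ ((WithLp.equiv 2 (d → ℂ)).symm (g k.1))
            ((WithLp.equiv 2 (d → ℂ)).symm (evec hX j)) : ℂ)‖ ^ 2 := by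
          refine Finset.sum_congr rfl fun k _ => ?_
          show _ = ‖evec hX j ⬝ᵥ star (g k.1)‖ ^ 2
          rw [dotProduct_comm, Complex.sq_norm]
      _ ≤ 1 := hb
  -- eigenvector orthogonal to eigenvectors of other eigenvalues
  have hsupp : ∀ k, t k ≠ 0 → ∀ j, lam j ≠ t k → star (g k) ⬝ᵥ evec hX j = 0 := by
    intro k hk j hne
    have h1 : star (g k) ⬝ᵥ (X *ᵥ evec hX j) = (lam j : ℂ) * (star (g k) ⬝ᵥ evec hX j) := by
      rw [mulVec_evec hX j, dotProduct_smul, smul_eq_mul]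
    have h2 : star (g k) ⬝ᵥ (X *ᵥ evec hX j) = (t k : ℂ) * (star (g k) ⬝ᵥ evec hX j) := by
      rw [Matrix.dotProduct_mulVec]
      have hsg : star (g k) ᵥ* X = (t k : ℂ) • star (g k) := by
        have := congrArg star (heig k hk)
        rw [Matrix.star_mulVec, hX.eq, star_smul] at this
        rw [this, Complex.star_def, Complex.conj_ofReal]
      rw [hsg, smul_dotProduct, smul_eq_mul]
    have h3 : ((lam j : ℂ) - (t k : ℂ)) * (star (g k) ⬝ᵥ evec hX j) = 0 := by
      rw [sub_mul, ← h1, ← h2, sub_self]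
    rcases mul_eq_zero.mp h3 with h | h
    · exfalso
      apply hne
      have : (lam j : ℂ) = (t k : ℂ) := by linear_combination h
      exact_mod_cast this
    · exact h
  have hunit : ∀ k, t k ≠ 0 → ∑ j, Complex.normSq (star (g k) ⬝ᵥ evec hX j) = 1 := by
    intro k hk
    have h := parseval hX (g k) (g k)
    rw [horth k k hk hk, if_pos rfl] at h
    have h' : ∀ j, (star (g k) ⬝ᵥ evec hX j) * (star (evec hX j) ⬝ᵥ g k)
        = ((Complex.normSq (star (g k) ⬝ᵥ evec hX j) : ℝ) : ℂ) := fun j => normSq_dot_comm _ _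
    rw [Finset.sum_congr rfl fun j _ => h' j] at h
    exact_mod_cast h
  have hform : ∀ k, t k ≠ 0 → Real.negMulLog (t k)
      = ∑ j, Complex.normSq (star (g k) ⬝ᵥ evec hX j) * Real.negMulLog (lam j) := by
    intro k hk
    have h1 : ∀ j, Complex.normSq (star (g k) ⬝ᵥ evec hX j) * Real.negMulLog (lam j)
        = Complex.normSq (star (g k) ⬝ᵥ evec hX j) * Real.negMulLog (t k) := by
      intro j
      by_cases hj : lam j = t k
      · rw [hj]
      · rw [hsupp k hk j hj, Complex.normSq_zero, zero_mul, zero_mul]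
    rw [Finset.sum_congr rfl fun j _ => h1 j, ← Finset.sum_mul, hunit k hk, one_mul]
  -- assemble
  have hSX : vnEntropy X = ∑ j, Real.negMulLog (lam j) := by
    rw [vnEntropy, dif_pos hX, ← Finset.sum_neg_distrib]
    exact Finset.sum_congr rfl fun j _ => by rw [Real.negMulLog]; ring
  rw [hSX]
  have hL : ∑ k, Real.negMulLog (t k) = ∑ k ∈ K, Real.negMulLog (t k) := by
    refine (Finset.sum_subset (Finset.subset_univ K) ?_).symm
    intro k _ hk
    have : t k = 0 := by by_contra h; exact hk ((hKmem k).mpr h)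
    rw [this, Real.negMulLog_zero]
  rw [hL, Finset.sum_congr rfl fun k hk => hform k ((hKmem k).mp hk), Finset.sum_comm]
  calc ∑ j, ∑ k ∈ K, Complex.normSq (star (g k) ⬝ᵥ evec hX j) * Real.negMulLog (lam j)
      = ∑ j, (∑ k ∈ K, Complex.normSq (star (g k) ⬝ᵥ evec hX j)) * Real.negMulLog (lam j) := by
        exact Finset.sum_congr rfl fun j _ => (Finset.sum_mul _ _ _).symm
    _ ≤ ∑ j, 1 * Real.negMulLog (lam j) := by
        refine Finset.sum_le_sum fun j _ => ?_
        exact mul_le_mul_of_nonneg_right (hBessel j) (hη j)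
    _ = ∑ j, Real.negMulLog (lam j) := by
        exact Finset.sum_congr rfl fun j _ => one_mul _

lemma sum_mulVecv {ι : Type*} (s : Finset ι) (A : ι → Matrix d d ℂ) (v : d → ℂ) :
    (∑ n ∈ s, A n) *ᵥ v = ∑ n ∈ s, A n *ᵥ v := by
  funext i
  simp only [Matrix.mulVec, dotProduct, Finset.sum_apply, Matrix.sum_apply,
    Finset.sum_mul]
  exact Finset.sum_comm

lemma posSemidef_sum {ι : Type*} (s : Finset ι) (A : ι → Matrix d d ℂ)
    (h : ∀ n ∈ s, (A n).PosSemidef) : (∑ n ∈ s, A n).PosSemidef := by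
  classical
  induction s using Finset.induction_on with
  | empty => simpa using Matrix.PosSemidef.zero
  | insert a s' hx ih =>
    rw [Finset.sum_insert hx]
    exact (h a (Finset.mem_insert_self a s')).add
      (ih fun n hn => h n (Finset.mem_insert_of_mem hn))

end MaxwellAux

open MaxwellAux in
theorem maxwell_entropy_le_lueders {N d : Type*} [Fintype N] [Fintype d] [DecidableEq d]
    (P : N → Matrix d d ℂ)
    (hPh : ∀ n, (P n).IsHermitian) (hPi : ∀ n, P n * P n = P n)
    (hPo : ∀ n m, n ≠ m → P n * P m = 0) (hPsum : ∑ n, P n = 1)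
    (U : N → Matrix d d ℂ) (hU : ∀ n, U n * (U n)ᴴ = 1 ∧ (U n)ᴴ * U n = 1)
    (ρ : Matrix d d ℂ) (hρ : ρ.PosSemidef) (htr : ρ.trace = 1) :
    vnEntropy (∑ n, U n * P n * ρ * P n * (U n)ᴴ) ≤
      vnEntropy (∑ n, P n * ρ * P n) := by
  classical
  set B : N → Matrix d d ℂ := fun n => P n * ρ * P n with hBdef
  have hBpsd : ∀ n, (B n).PosSemidef := by
    intro n
    have h := hρ.mul_mul_conjTranspose_same (P n)
    rwa [(hPh n).eq] at h
  have hBh : ∀ n, (B n).IsHermitian := fun n => (hBpsd n).isHermitian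
  have hBmulB : ∀ n m, n ≠ m → B n * B m = 0 := by
    intro n m hnm
    have h1 : B n * B m = P n * ρ * (P n * P m) * (ρ * P m) := by
      simp only [hBdef, Matrix.mul_assoc]
    rw [h1, hPo n m hnm, Matrix.mul_zero, Matrix.zero_mul]
  set κ : N → d → ℝ := fun n => (hBh n).eigenvalues with hκdef
  have hκ0 : ∀ n i, 0 ≤ κ n i := fun n i => (hBpsd n).eigenvalues_nonneg i
  -- eigenvectors of one block are killed by the other blocks
  have hcross : ∀ n m, n ≠ m → ∀ i, κ m i ≠ 0 → B n *ᵥ evec (hBh m) i = 0 := by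
    intro n m hnm i hκi
    have h1 : B m *ᵥ evec (hBh m) i = (κ m i : ℂ) • evec (hBh m) i := mulVec_evec (hBh m) i
    have hκc : (κ m i : ℂ) ≠ 0 := by exact_mod_cast hκi
    have h2 : evec (hBh m) i = (κ m i : ℂ)⁻¹ • (B m *ᵥ evec (hBh m) i) := by
      rw [h1, smul_smul, inv_mul_cancel₀ hκc, one_smul]
    calc B n *ᵥ evec (hBh m) i
        = B n *ᵥ ((κ m i : ℂ)⁻¹ • (B m *ᵥ evec (hBh m) i)) := by rw [← h2]
      _ = (κ m i : ℂ)⁻¹ • (B n *ᵥ (B m *ᵥ evec (hBh m) i)) := Matrix.mulVec_smul _ _ _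
      _ = (κ m i : ℂ)⁻¹ • ((B n * B m) *ᵥ evec (hBh m) i) := by rw [Matrix.mulVec_mulVec]
      _ = 0 := by rw [hBmulB n m hnm, Matrix.zero_mulVec, smul_zero]
  set L : Matrix d d ℂ := ∑ n, B n with hLdef
  have hLpsd : L.PosSemidef := posSemidef_sum _ _ fun n _ => hBpsd n
  have hLh : L.IsHermitian := hLpsd.isHermitian
  have htrL : L.trace = 1 := by
    rw [hLdef, Matrix.trace_sum]
    have h1 : ∀ n, (B n).trace = (P n * ρ).trace := by
      intro n
      rw [hBdef]
      rw [Matrix.trace_mul_cycle (P n) ρ (P n), hPi n]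
    rw [Finset.sum_congr rfl fun n _ => h1 n, ← Matrix.trace_sum, ← Finset.sum_mul, hPsum,
      Matrix.one_mul, htr]
  set M : Matrix d d ℂ := ∑ n, U n * B n * (U n)ᴴ with hMdef
  have hMrw : (∑ n, U n * P n * ρ * P n * (U n)ᴴ) = M := by
    refine Finset.sum_congr rfl fun n _ => ?_
    simp only [hMdef, hBdef, Matrix.mul_assoc]
  have hMpsd : M.PosSemidef := posSemidef_sum _ _ fun n _ => (hBpsd n).mul_mul_conjTranspose_same (U n)
  have hMh : M.IsHermitian := hMpsd.isHermitian
  -- the Maxwell state as an ensemble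
  set g : N × d → (d → ℂ) := fun p => U p.1 *ᵥ evec (hBh p.1) p.2 with hgdef
  have hgnorm : ∀ p : N × d, star (g p) ⬝ᵥ g p = 1 := by
    intro p
    rw [hgdef]
    rw [Matrix.star_mulVec, Matrix.dotProduct_mulVec, Matrix.vecMul_vecMul, (hU p.1).2,
      Matrix.vecMul_one, evec_dot (hBh p.1) p.2 p.2, if_pos rfl]
  have hQM : ∀ y : d → ℂ, star y ⬝ᵥ (M *ᵥ y)
      = ((∑ p : N × d, κ p.1 p.2 * Complex.normSq (star (g p) ⬝ᵥ y) : ℝ) : ℂ) := by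
    intro y
    rw [hMdef, sum_mulVecv, dotProduct_sumv]
    have h1 : ∀ n, star y ⬝ᵥ ((U n * B n * (U n)ᴴ) *ᵥ y)
        = ((∑ i, κ n i * Complex.normSq (star (g (n, i)) ⬝ᵥ y) : ℝ) : ℂ) := by
      intro n
      have hz : star ((U n)ᴴ *ᵥ y) = star y ᵥ* U n := by
        rw [Matrix.star_mulVec, Matrix.conjTranspose_conjTranspose]
      have h2 : star y ⬝ᵥ ((U n * B n * (U n)ᴴ) *ᵥ y)
          = star ((U n)ᴴ *ᵥ y) ⬝ᵥ (B n *ᵥ ((U n)ᴴ *ᵥ y)) := by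
        rw [hz]
        rw [show U n * B n * (U n)ᴴ = U n * (B n * (U n)ᴴ) from Matrix.mul_assoc _ _ _]
        rw [← Matrix.mulVec_mulVec, Matrix.dotProduct_mulVec, ← Matrix.mulVec_mulVec]
      rw [h2, quadForm (hBh n)]
      congr 1
      refine Finset.sum_congr rfl fun i _ => ?_
      congr 2
      rw [hgdef]
      rw [Matrix.dotProduct_mulVec, ← Matrix.star_mulVec]
    rw [Finset.sum_congr rfl fun n _ => h1 n, Fintype.sum_prod_type]
    push_cast
    rfl
  -- eigen-facts for the Lueders state
  have heigL : ∀ p : N × d, κ p.1 p.2 ≠ 0 →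
      L *ᵥ evec (hBh p.1) p.2 = (κ p.1 p.2 : ℂ) • evec (hBh p.1) p.2 := by
    rintro ⟨n, i⟩ hκi
    rw [hLdef, sum_mulVecv]
    rw [Finset.sum_eq_single_of_mem n (Finset.mem_univ n)]
    · exact mulVec_evec (hBh n) i
    · intro m _ hmn
      exact hcross m n hmn i hκi
  have horthL : ∀ p q : N × d, κ p.1 p.2 ≠ 0 → κ q.1 q.2 ≠ 0 →
      star (evec (hBh p.1) p.2) ⬝ᵥ evec (hBh q.1) q.2 = if p = q then 1 else 0 := by
    rintro ⟨n, i⟩ ⟨m, j⟩ hp hq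
    by_cases hnm : n = m
    · subst hnm
      rw [evec_dot (hBh n) i j]
      by_cases hij : i = j
      · rw [if_pos hij, if_pos (by rw [hij])]
      · rw [if_neg hij, if_neg (by simp [hij])]
    · rw [if_neg (by simp [hnm])]
      have hq2 : evec (hBh m) j = (κ m j : ℂ)⁻¹ • (B m *ᵥ evec (hBh m) j) := by
        rw [mulVec_evec (hBh m) j, smul_smul,
          inv_mul_cancel₀ (show (κ m j : ℂ) ≠ 0 by exact_mod_cast hq), one_smul]
      rw [hq2, dotProduct_smul, Matrix.dotProduct_mulVec]
      have h3 : star (evec (hBh n) i) ᵥ* B m = 0 := by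
        rw [← (hBh m).eq, ← Matrix.star_mulVec, hcross m n (Ne.symm hnm) i hp, star_zero]
      rw [h3, zero_dotProduct, smul_zero]
  -- conclude
  rw [hMrw]
  calc vnEntropy M ≤ ∑ p : N × d, Real.negMulLog (κ p.1 p.2) :=
        ensemble_entropy_le hMh (fun p : N × d => κ p.1 p.2) (fun p : N × d => hκ0 p.1 p.2) g hgnorm hQM
    _ ≤ vnEntropy L :=
        ortho_family_entropy_ge hLh hLpsd htrL (fun p : N × d => κ p.1 p.2) (fun p : N × d => hκ0 p.1 p.2)
          (fun p : N × d => evec (hBh p.1) p.2) horthL heigL
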